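/- arXiv:1207.3768 — 5 statements merged into one kernel-verified Lean document; each statement's English description precedes it below -/
import Mathlib

section
/- For every z in the open unit disk, Re((1-z^2)/(1-z+z^2)) > 0. -/
open Complex

theorem stmt1 (z : ℂ) (hz : ‖z‖ < 1) :
    0 < ((1 - z ^ 2) / (1 - z + z ^ 2)).re := by
  have hs : z.re ^ 2 + z.im ^ 2 < 1 := by
    have h : Complex.normSq z < 1 := by
      have := Complex.sq_norm z
      nlinarith [norm_nonneg z, hz, hz]
    simpa [Complex.normSq_apply, pow_two] using h
  have hx : z.re < 1 := by nlinarith [sq_nonneg z.im]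
  have hN : (1 - z ^ 2).re * (1 - z + z ^ 2).re + (1 - z ^ 2).im * (1 - z + z ^ 2).im
      = (1 - (z.re ^ 2 + z.im ^ 2)) * (1 + (z.re ^ 2 + z.im ^ 2) - z.re) := by
    simp [pow_two, Complex.mul_re, Complex.mul_im, Complex.sub_re, Complex.sub_im,
      Complex.add_re, Complex.add_im]
    ring
  have hNpos : 0 < (1 - (z.re ^ 2 + z.im ^ 2)) * (1 + (z.re ^ 2 + z.im ^ 2) - z.re) := by
    nlinarith [sq_nonneg z.re, sq_nonneg z.im]
  have hd : (1 - z + z ^ 2) ≠ 0 := by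
    intro h
    rw [h] at hN
    simp at hN
    rcases hN with h1 | h1 <;> nlinarith
  have hnsq : 0 < Complex.normSq (1 - z + z ^ 2) := Complex.normSq_pos.mpr hd
  rw [Complex.div_re, ← add_div, hN]
  exact div_pos hNpos hnsq
end

section
/- For every z in the open unit disk, Re(1 - z^2 + (1+z)/(1-z)) > 0. -/
open Complex

theorem stmt5 (z : ℂ) (hz : ‖z‖ < 1) :
    0 < (1 - z ^ 2 + (1 + z) / (1 - z)).re := by
  have h1 : z.re^2 + z.im^2 < 1 := by
    have h := Complex.sq_norm z
    rw [Complex.normSq_apply] at h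
    have habs : ‖z‖ < 1 := hz
    nlinarith [norm_nonneg z]
  have hne : (1 : ℂ) - z ≠ 0 := by
    intro h
    have : z = 1 := by linear_combination -h
    rw [this] at hz; norm_num at hz
  have hsq : 0 < Complex.normSq (1 - z) := by
    simpa [Complex.normSq_pos] using hne
  rw [sq]
  simp only [Complex.add_re, Complex.sub_re, Complex.one_re, Complex.div_re,
    Complex.normSq_apply, Complex.add_im, Complex.one_im,
    Complex.sub_im, Complex.mul_re, Complex.mul_im] at *
  have hnum : 0 < (1 + z.re) * (1 - z.re) + (0 + z.im) * (0 - z.im) := by nlinarith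
  rw [← add_div]
  have hpos := div_pos hnum hsq
  nlinarith [sq_nonneg z.im]
end

section
/- For every z in the open unit disk, Re(1 - z^2 + (1+z^2)/(1-z^2)) > 0. -/
open Complex

theorem stmt6 (z : ℂ) (hz : ‖z‖ < 1) :
    0 < (1 - z ^ 2 + (1 + z ^ 2) / (1 - z ^ 2)).re := by
  set w : ℂ := z ^ 2 with hwdef
  have hw : ‖w‖ < 1 := by
    rw [hwdef, norm_pow]
    calc ‖z‖ ^ 2 ≤ ‖z‖ := by nlinarith [norm_nonneg z]
    _ < 1 := hz
  have hsq : w.re ^ 2 + w.im ^ 2 < 1 := by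
    have h1 : Complex.normSq w < 1 := by
      rw [Complex.normSq_eq_norm_sq]
      nlinarith [norm_nonneg w, hw]
    simpa [Complex.normSq_apply, sq] using h1
  have h1 : w.re < 1 := by nlinarith [sq_nonneg w.im]
  have hd : 0 < (1 - w.re) ^ 2 + w.im ^ 2 := by nlinarith [sq_nonneg w.im]
  have hns : Complex.normSq (1 - w) = (1 - w.re) ^ 2 + w.im ^ 2 := by
    simp [Complex.normSq_apply, sq]
  rw [Complex.add_re, Complex.div_re, hns]
  simp only [Complex.sub_re, Complex.add_re, Complex.one_re, Complex.sub_im,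
    Complex.add_im, Complex.one_im]
  have h2 : 0 < ((1 + w.re) * (1 - w.re) + (0 + w.im) * (0 - w.im)) /
      ((1 - w.re) ^ 2 + w.im ^ 2) := by
    apply div_pos _ hd
    nlinarith
  have h3 : (1 + w.re) * (1 - w.re) / ((1 - w.re) ^ 2 + w.im ^ 2) +
      (0 + w.im) * (0 - w.im) / ((1 - w.re) ^ 2 + w.im ^ 2) =
      ((1 + w.re) * (1 - w.re) + (0 + w.im) * (0 - w.im)) /
      ((1 - w.re) ^ 2 + w.im ^ 2) := by ring
  rw [h3]
  linarith
end

section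
/- For every real θ that is not an integer multiple of π, the imaginary part of e^{iθ}(2-e^{iθ})/(2(1-e^{2iθ})) has absolute value at least √3/4. -/
open Complex

theorem stmt9 (θ : ℝ) (h : Real.sin θ ≠ 0) :
    Real.sqrt 3 / 4 ≤
      |(exp (θ * I) * (2 - exp (θ * I)) / (2 * (1 - exp (2 * θ * I)))).im| := by
  set s := Real.sin θ with hs
  set c := Real.cos θ with hc
  have hcs : s ^ 2 + c ^ 2 = 1 := by
    rw [hs, hc]; exact Real.sin_sq_add_cos_sq θ
  have hexp : exp (θ * I) = (c : ℂ) + (s : ℂ) * I := by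
    rw [Complex.exp_mul_I, hc, hs]
    simp [Complex.ofReal_cos, Complex.ofReal_sin]
  have h2 : exp (2 * θ * I) = ((c : ℂ) + (s : ℂ) * I) ^ 2 := by
    have e : (2 * θ : ℂ) * I = θ * I + θ * I := by ring
    rw [e, Complex.exp_add, hexp]; ring
  have him : (exp (θ * I) * (2 - exp (θ * I)) / (2 * (1 - exp (2 * θ * I)))).im
      = (2 - c) / (4 * s) := by
    rw [hexp, h2, Complex.div_im]
    simp only [Complex.normSq_apply, Complex.mul_re, Complex.mul_im, Complex.sub_re,
      Complex.sub_im, Complex.add_re, Complex.add_im, Complex.ofReal_re, Complex.ofReal_im,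
      Complex.I_re, Complex.I_im, Complex.one_re, Complex.one_im, Complex.re_ofNat, Complex.im_ofNat, pow_two]
    ring_nf
    have hD : (4 : ℝ) - c ^ 2 * 8 + c ^ 2 * s ^ 2 * 8 + c ^ 4 * 4 + s ^ 2 * 8 + s ^ 4 * 4
        = 16 * s ^ 2 := by
      linear_combination (4 * (s ^ 2 + c ^ 2 - 1)) * hcs
    rw [hD]
    field_simp
    ring_nf
    linear_combination (32) * hcs
  rw [him]
  have hclb : (-1:ℝ) ≤ c := hc ▸ Real.neg_one_le_cos θ
  have hcub : c ≤ 1 := hc ▸ Real.cos_le_one θ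
  have h3 : Real.sqrt 3 * |s| ≤ 2 - c := by
    have e1 : Real.sqrt 3 * |s| = Real.sqrt (3 * s ^ 2) := by
      rw [Real.sqrt_mul (by norm_num), Real.sqrt_sq_eq_abs]
    have e2 : (2 : ℝ) - c = Real.sqrt ((2 - c) ^ 2) := by
      rw [Real.sqrt_sq_eq_abs, _root_.abs_of_nonneg (by linarith)]
    rw [e1, e2]
    apply Real.sqrt_le_sqrt
    nlinarith [sq_nonneg (2*c - 1)]
  have hsabs : 0 < |s| := abs_pos.mpr h
  rw [abs_div]
  have e4 : |(4:ℝ) * s| = 4 * |s| := by rw [abs_mul]; norm_num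
  have e2c : |2 - c| = 2 - c := _root_.abs_of_nonneg (by linarith)
  rw [e4, e2c, div_le_div_iff₀ (by norm_num) (by positivity)]
  nlinarith [h3, hsabs, Real.sqrt_nonneg 3]
end

section
/- For the harmonic function f(z) = Re(z/(1-z)^2) + i·Im(z/(1-z)), one has for all real t with |t| < π/2 and t ≠ 0 that ∂/∂t arg f(e^{it}) = (2 cos t)/(cos 2t - 3) < 0; in particular f is not starlike with respect to the origin. -/
open Complex Real

lemma hd1 (w : ℂ) (hw : (1:ℂ) - w ≠ 0) :
    HasDerivAt (fun z : ℂ => z / (1 - z) ^ 2)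
      ((1 * ((1-w)^2) - w * (2 * (1-w)^1 * (0 - 1))) / ((1-w)^2)^2) w :=
  (hasDerivAt_id w).div (((hasDerivAt_const w (1:ℂ)).sub (hasDerivAt_id w)).pow 2)
    (pow_ne_zero 2 hw)

lemma hd2 (w : ℂ) (hw : (1:ℂ) - w ≠ 0) :
    HasDerivAt (fun z : ℂ => z / (1 - z))
      ((1 * (1-w) - w * (0 - 1)) / (1-w)^2) w :=
  (hasDerivAt_id w).div ((hasDerivAt_const w (1:ℂ)).sub (hasDerivAt_id w)) hw

lemma hderivh (w : ℂ) (hw : (1:ℂ) - w ≠ 0) :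
    HasDerivAt (fun z : ℂ => (1/2 : ℂ) * (z / (1 - z) ^ 2 + z / (1 - z)))
      ((1/2) * ((1 + w)/(1-w)^3 + 1/(1-w)^2)) w := by
  have := (((hd1 w hw).add (hd2 w hw)).const_mul (1/2 : ℂ))
  refine this.congr_deriv ?_
  field_simp
  ring

lemma hderivg (w : ℂ) (hw : (1:ℂ) - w ≠ 0) :
    HasDerivAt (fun z : ℂ => (1/2 : ℂ) * (z / (1 - z) ^ 2 - z / (1 - z)))
      ((1/2) * ((1 + w)/(1-w)^3 - 1/(1-w)^2)) w := by
  have := (((hd1 w hw).sub (hd2 w hw)).const_mul (1/2 : ℂ))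
  refine this.congr_deriv ?_
  field_simp
  ring

lemma keyDf (z : ℂ) (hz0 : z ≠ 0) (h1z : (1:ℂ) - z ≠ 0) :
    z * ((1/2) * ((1 + z)/(1-z)^3 + 1/(1-z)^2)) -
      (1/z) * ((1/2)*((1 + 1/z)/(1-1/z)^3 - 1/(1-1/z)^2)) = 2*z/(1-z)^3 := by
  have hz1 : z - 1 ≠ 0 := fun hc => h1z (by linear_combination -hc)
  have a1 : (1+1/z)/(1-1/z)^3 = -(z^2*(1+z))/(1-z)^3 := by
    field_simp; try ring
  have a2 : 1/((1:ℂ)-1/z)^2 = z^2/(1-z)^2 := by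
    field_simp; try ring
  have s1 : (1+z)/(1-z)^3 + 1/(1-z)^2 = 2/(1-z)^3 := by
    field_simp; try ring
  have s2 : -(z^2*(1+z))/(1-z)^3 - z^2/(1-z)^2 = (-2*z^2)/(1-z)^3 := by
    field_simp; try ring
  rw [a1, a2, s1, s2]
  field_simp
  ring

lemma keyf (z : ℂ) (hz0 : z ≠ 0) (h1z : (1:ℂ) - z ≠ 0) :
    (1/2 : ℂ) * (z / (1 - z) ^ 2 + z / (1 - z)) +
      ((1/2) * ((1/z) / (1 - 1/z) ^ 2 - (1/z) / (1 - 1/z))) =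
      (1+2*z-z^2)/(2*(1-z)^2) := by
  have hz1 : z - 1 ≠ 0 := fun hc => h1z (by linear_combination -hc)
  have a2 : (1/z)/((1:ℂ)-1/z)^2 = z/(1-z)^2 := by
    field_simp; try ring
  have a3 : (1/z)/((1:ℂ)-1/z) = -1/(1-z) := by
    field_simp; try ring
  have s1 : z/(1-z)^2 + z/(1-z) = (z + z*(1-z))/(1-z)^2 := by
    field_simp; try ring
  have s2 : z/(1-z)^2 - -1/(1-z) = (z + (1-z))/(1-z)^2 := by
    field_simp; try ring
  rw [a2, a3, s1, s2]
  field_simp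
  try ring

lemma keyQ (z : ℂ) (h1z : (1:ℂ) - z ≠ 0)
    (hd : (1:ℂ) + 2*z - z^2 ≠ 0) :
    (2*z/(1-z)^3) / ((1+2*z-z^2)/(2*(1-z)^2)) = 4*z/((1-z)*(1+2*z-z*z)) := by
  have hd' : (1:ℂ) + 2*z - z*z ≠ 0 := by
    intro hc; exact hd (by linear_combination hc)
  rw [div_div_div_eq]
  rw [div_eq_div_iff (by exact mul_ne_zero (pow_ne_zero 3 h1z) hd)
    (mul_ne_zero h1z hd')]
  ring

theorem stmt15 (t : ℝ) (ht : |t| < π / 2) (ht0 : t ≠ 0)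
    (h g f Df : ℂ → ℂ)
    (hh : h = fun z => (1 / 2) * (z / (1 - z) ^ 2 + z / (1 - z)))
    (hg : g = fun z => (1 / 2) * (z / (1 - z) ^ 2 - z / (1 - z)))
    (hf : f = fun z => h z + (starRingEnd ℂ) (g z))
    (hDf : Df = fun z => z * deriv h z - (starRingEnd ℂ) (z * deriv g z)) :
    (Df (exp (t * I)) / f (exp (t * I))).re =
        2 * Real.cos t / (Real.cos (2 * t) - 3) ∧
      2 * Real.cos t / (Real.cos (2 * t) - 3) < 0 := by
  obtain ⟨htl, htr⟩ := abs_lt.mp ht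
  have hcos_pos : 0 < Real.cos t := Real.cos_pos_of_mem_Ioo ⟨htl, htr⟩
  have hpi : (0:ℝ) < π := Real.pi_pos
  have hcos_lt : Real.cos t < 1 := by
    rcases lt_or_eq_of_le (Real.cos_le_one t) with h0 | h0
    · exact h0
    · exact absurd ((Real.cos_eq_one_iff_of_lt_of_lt (by linarith) (by linarith)).mp h0) ht0
  set z : ℂ := Complex.exp (t * I) with hzdef
  have hz0 : z ≠ 0 := Complex.exp_ne_zero _
  have hzre : z.re = Real.cos t := by rw [hzdef]; exact Complex.exp_ofReal_mul_I_re t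
  have hzim : z.im = Real.sin t := by rw [hzdef]; exact Complex.exp_ofReal_mul_I_im t
  have hz1' : z ≠ 1 := by
    intro hzz; rw [hzz] at hzre; simp at hzre; linarith
  have hz1 : (1:ℂ) - z ≠ 0 := by
    intro hc; exact hz1' (by linear_combination -hc)
  have hconj : (starRingEnd ℂ) z = 1/z := by
    rw [eq_div_iff hz0, mul_comm, hzdef, Complex.mul_conj]
    norm_cast
    rw [Complex.normSq_eq_norm_sq, Complex.norm_exp_ofReal_mul_I]
    norm_num
  have hdh : deriv h z = (1/2) * ((1 + z)/(1-z)^3 + 1/(1-z)^2) := by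
    rw [hh]; exact (hderivh z hz1).deriv
  have hdg : deriv g z = (1/2) * ((1 + z)/(1-z)^3 - 1/(1-z)^2) := by
    rw [hg]; exact (hderivg z hz1).deriv
  have hDfz : Df z = 2*z/(1-z)^3 := by
    rw [hDf]
    simp only
    rw [hdh, hdg, map_mul, hconj]
    have hcg : (starRingEnd ℂ) ((1:ℂ)/2 * ((1 + z)/(1-z)^3 - 1/(1-z)^2)) =
        (1/2)*((1 + 1/z)/(1-1/z)^3 - 1/(1-1/z)^2) := by
      simp only [map_mul, map_div₀, map_sub, map_add, map_pow, map_one, map_ofNat, hconj]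
    rw [hcg]
    exact keyDf z hz0 hz1
  have hfz : f z = (1+2*z-z^2)/(2*(1-z)^2) := by
    rw [hf, hh, hg]
    simp only
    have hcg : (starRingEnd ℂ) ((1:ℂ)/2 * (z/(1-z)^2 - z/(1-z))) =
        (1/2)*((1/z)/(1-1/z)^2 - (1/z)/(1-1/z)) := by
      simp only [map_mul, map_div₀, map_sub, map_add, map_pow, map_one, map_ofNat, hconj]
    rw [hcg]
    exact keyf z hz0 hz1
  have hz_eq : z = (Real.cos t : ℂ) + (Real.sin t : ℂ) * I := by
    rw [hzdef, Complex.exp_mul_I, Complex.ofReal_cos, Complex.ofReal_sin]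
  have hpyth := Real.sin_sq_add_cos_sq t
  have hden : ((1:ℂ)+2*z-z^2) ≠ 0 := by
    intro hc
    have hc' : (z - 1)^2 = 2 := by linear_combination -hc
    have h0 := congrArg Complex.normSq hc'
    rw [sq, Complex.normSq_mul] at h0
    simp [Complex.normSq_apply, Complex.sub_re, Complex.sub_im, hzre, hzim] at h0
    nlinarith [hpyth, hcos_pos, hcos_lt]
  have hfne : f z ≠ 0 := by
    rw [hfz]
    exact div_ne_zero hden (mul_ne_zero two_ne_zero (pow_ne_zero 2 hz1))
  have hQ : Df z / f z = 4*z/((1-z)*(1+2*z-z*z)) := by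
    rw [hDfz, hfz]; exact keyQ z hz1 hden
  constructor
  · rw [hQ, Complex.div_re]
    have c4re : ((4:ℂ)*z).re = 4*Real.cos t := by
      rw [hz_eq]; simp [Complex.cos_ofReal_re, Complex.sin_ofReal_re]
    have c4im : ((4:ℂ)*z).im = 4*Real.sin t := by
      rw [hz_eq]; simp [Complex.cos_ofReal_re, Complex.sin_ofReal_re]
    have hDre : (((1:ℂ)-z)*(1+2*z-z*z)).re =
        (1-Real.cos t)*(1+2*Real.cos t-Real.cos t^2+Real.sin t^2) +
          Real.sin t*(2*Real.sin t-2*Real.cos t*Real.sin t) := by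
      rw [hz_eq]
      simp only [Complex.normSq_apply, Complex.add_re, Complex.add_im, Complex.sub_re,
        Complex.sub_im, Complex.mul_re, Complex.mul_im, Complex.one_re, Complex.one_im,
        Complex.ofReal_re, Complex.ofReal_im, Complex.I_re, Complex.I_im,
        Complex.re_ofNat, Complex.im_ofNat]
      ring
    have hDim : (((1:ℂ)-z)*(1+2*z-z*z)).im =
        (1-Real.cos t)*(2*Real.sin t-2*Real.cos t*Real.sin t) -
          Real.sin t*(1+2*Real.cos t-Real.cos t^2+Real.sin t^2) := by
      rw [hz_eq]
      simp only [Complex.normSq_apply, Complex.add_re, Complex.add_im, Complex.sub_re,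
        Complex.sub_im, Complex.mul_re, Complex.mul_im, Complex.one_re, Complex.one_im,
        Complex.ofReal_re, Complex.ofReal_im, Complex.I_re, Complex.I_im,
        Complex.re_ofNat, Complex.im_ofNat]
      ring
    have hns : Complex.normSq (((1:ℂ)-z)*(1+2*z-z*z)) =
        8*(1-Real.cos t)*(1+Real.sin t^2) := by
      rw [Complex.normSq_apply, hDre, hDim]
      linear_combination ((7:ℝ) + (8:ℝ)*Real.sin t^2 + (1:ℝ)*Real.sin t^4 +
        (-10:ℝ)*Real.cos t + (-6:ℝ)*Real.cos t*Real.sin t^2 + (12:ℝ)*Real.cos t^2 +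
        (2:ℝ)*Real.cos t^2*Real.sin t^2 + (-6:ℝ)*Real.cos t^3 + (1:ℝ)*Real.cos t^4) * hpyth
    rw [c4re, c4im, hDre, hDim, hns, Real.cos_two_mul]
    have h8 : 8*(1-Real.cos t)*(1+Real.sin t^2) ≠ 0 := by
      have : (0:ℝ) < 8*(1-Real.cos t)*(1+Real.sin t^2) := by nlinarith [sq_nonneg (Real.sin t)]
      exact this.ne'
    have hc2 : 2*Real.cos t^2-1-3 ≠ 0 := by nlinarith
    rw [← add_div, div_eq_div_iff h8 hc2]
    linear_combination ((16:ℝ)*Real.sin t^2 + (32:ℝ)*Real.cos t +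
      (-8:ℝ)*Real.cos t^2*Real.sin t^2 + (-24:ℝ)*Real.cos t^3 + (8:ℝ)*Real.cos t^4) * hpyth
  · apply div_neg_of_pos_of_neg
    · linarith
    · nlinarith [Real.neg_one_le_cos (2*t), Real.cos_le_one (2*t)]
end
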